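/- arXiv:1508.00192 — 5 statements merged into one kernel-verified Lean document; each statement's English description precedes it below -/
import Mathlib

section
/- For every ε > 0, every Δ > 0, all real numbers μ₁, μ₂ with |μ₁ − μ₂| ≤ Δ, and every z ∈ ℝ, the Laplace output densities at z satisfy (1/(2b))·exp(−|z − μ₁|/b) ≤ exp(ε) · (1/(2b))·exp(−|z − μ₂|/b), where b = Δ/ε. (This is the pointwise density-ratio bound showing that the Laplace mechanism with noise scale Δ/ε satisfies ε-differential privacy when the query has sensitivity Δ.) -/
/-- Pointwise density-ratio bound for the Laplace mechanism: with noise scale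
`b = Δ/ε`, the Laplace densities centered at `μ₁` and `μ₂` (with `|μ₁ - μ₂| ≤ Δ`)
differ pointwise by at most a factor `exp ε`. -/
theorem laplace_mechanism_density_ratio
    (ε Δ μ₁ μ₂ z : ℝ) (hε : 0 < ε) (hΔ : 0 < Δ) (hsens : |μ₁ - μ₂| ≤ Δ) :
    (1 / (2 * (Δ / ε))) * Real.exp (-|z - μ₁| / (Δ / ε)) ≤
      Real.exp ε * ((1 / (2 * (Δ / ε))) * Real.exp (-|z - μ₂| / (Δ / ε))) := by
  have hb : 0 < Δ / ε := div_pos hΔ hε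
  have hc : 0 < 1 / (2 * (Δ / ε)) := by positivity
  rw [mul_left_comm]
  apply mul_le_mul_of_nonneg_left _ hc.le
  rw [← Real.exp_add]
  apply Real.exp_le_exp.mpr
  have h1 : |z - μ₂| - |z - μ₁| ≤ Δ := by
    have := abs_sub_abs_le_abs_sub (z - μ₂) (z - μ₁)
    have h2 : |z - μ₂ - (z - μ₁)| = |μ₁ - μ₂| := by rw [show z - μ₂ - (z - μ₁) = μ₁ - μ₂ by ring]
    linarith [h2 ▸ this]
  have : (|z - μ₂| - |z - μ₁|) / (Δ / ε) ≤ ε := by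
    rw [div_le_iff₀ hb]
    calc |z - μ₂| - |z - μ₁| ≤ Δ := h1
      _ = ε * (Δ / ε) := by field_simp
  have h3 : -|z - μ₁| / (Δ / ε) - (-|z - μ₂| / (Δ / ε)) = (|z - μ₂| - |z - μ₁|) / (Δ / ε) := by
    ring
  linarith [h3 ▸ this]
end

section
/- Let R be a nonempty finite type, let S > 0 and ε ≥ 0, and let q₁, q₂ : R → ℝ satisfy |q₁(r) − q₂(r)| ≤ S for all r ∈ R. For j ∈ {1,2} define the probability mass function p_j(r) = exp(ε·q_j(r)/(2S)) / Σ_{r′∈R} exp(ε·q_j(r′)/(2S)). Then for every r ∈ R, p₁(r) ≤ exp(ε) · p₂(r). (This is the density-ratio bound showing that the Exponential mechanism with quality function of sensitivity S satisfies ε-differential privacy.) -/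
open Finset in
/-- Density-ratio bound for the Exponential mechanism: if the quality functions
`q₁, q₂` differ pointwise by at most the sensitivity `S`, then the corresponding
exponential-mechanism output probabilities differ by at most a factor `exp ε`. -/
theorem exponential_mechanism_density_ratio
    {R : Type*} [Fintype R] [Nonempty R]
    (S ε : ℝ) (hS : 0 < S) (hε : 0 ≤ ε)
    (q₁ q₂ : R → ℝ) (hq : ∀ r : R, |q₁ r - q₂ r| ≤ S) (r : R) :
    Real.exp (ε * q₁ r / (2 * S)) / (∑ r' : R, Real.exp (ε * q₁ r' / (2 * S))) ≤
      Real.exp ε *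
        (Real.exp (ε * q₂ r / (2 * S)) / (∑ r' : R, Real.exp (ε * q₂ r' / (2 * S)))) := by
  have key : ∀ (a b : R → ℝ), (∀ s, |a s - b s| ≤ S) → ∀ s,
      Real.exp (ε * a s / (2 * S)) ≤ Real.exp (ε / 2) * Real.exp (ε * b s / (2 * S)) := by
    intro a b hab s
    rw [← Real.exp_add]
    apply Real.exp_le_exp.mpr
    have h1 : a s - b s ≤ S := (abs_le.mp (hab s)).2
    have : ε * a s / (2 * S) - ε * b s / (2 * S) ≤ ε / 2 := by
      rw [div_sub_div_same, ← mul_sub]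
      rw [div_le_div_iff₀ (by positivity) (by norm_num)]
      nlinarith [mul_le_mul_of_nonneg_left h1 hε]
    linarith
  have hsum : ∀ (a : R → ℝ), 0 < ∑ r' : R, Real.exp (ε * a r' / (2 * S)) := by
    intro a
    exact Finset.sum_pos (fun i _ => Real.exp_pos _) Finset.univ_nonempty
  have hnum : Real.exp (ε * q₁ r / (2 * S)) ≤
      Real.exp (ε / 2) * Real.exp (ε * q₂ r / (2 * S)) := key q₁ q₂ hq r
  have hden : (∑ r' : R, Real.exp (ε * q₂ r' / (2 * S))) ≤
      Real.exp (ε / 2) * ∑ r' : R, Real.exp (ε * q₁ r' / (2 * S)) := by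
    rw [Finset.mul_sum]
    exact Finset.sum_le_sum fun i _ =>
      key q₂ q₁ (fun s => by rw [abs_sub_comm]; exact hq s) i
  have h1 := hsum q₁
  have h2 := hsum q₂
  rw [div_le_iff₀ h1]
  have hε2 : Real.exp ε = Real.exp (ε / 2) * Real.exp (ε / 2) := by
    rw [← Real.exp_add]; ring_nf
  calc Real.exp (ε * q₁ r / (2 * S))
      ≤ Real.exp (ε / 2) * Real.exp (ε * q₂ r / (2 * S)) := hnum
    _ ≤ Real.exp ε * (Real.exp (ε * q₂ r / (2 * S)) /
          (∑ r' : R, Real.exp (ε * q₂ r' / (2 * S)))) *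
          (∑ r' : R, Real.exp (ε * q₁ r' / (2 * S))) := by
        rw [hε2]
        rw [show Real.exp (ε / 2) * Real.exp (ε / 2) *
            (Real.exp (ε * q₂ r / (2 * S)) / ∑ r' : R, Real.exp (ε * q₂ r' / (2 * S))) *
            (∑ r' : R, Real.exp (ε * q₁ r' / (2 * S))) =
            Real.exp (ε / 2) * Real.exp (ε / 2) * Real.exp (ε * q₂ r / (2 * S)) *
            (∑ r' : R, Real.exp (ε * q₁ r' / (2 * S))) /
            (∑ r' : R, Real.exp (ε * q₂ r' / (2 * S))) from by ring,
          le_div_iff₀ h2]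
        nlinarith [Real.exp_pos (ε / 2), Real.exp_pos (ε * q₂ r / (2 * S)),
          mul_le_mul_of_nonneg_left hden
            (mul_nonneg (Real.exp_pos (ε / 2)).le (Real.exp_pos (ε * q₂ r / (2 * S))).le)]
end

section
/- Let α and β be types, ε₁, ε₂ ≥ 0, let p₁, p₂ be probability mass functions on α with p₁(a) ≤ exp(ε₁)·p₂(a) for every a ∈ α, and let k₁, k₂ : α → PMF β satisfy k₁(a)(b) ≤ exp(ε₂)·k₂(a)(b) for every a ∈ α and b ∈ β. Then for every b ∈ β, (p₁ bind k₁)(b) ≤ exp(ε₁ + ε₂) · (p₂ bind k₂)(b). (Sequential composition: running an ε₁-differentially private mechanism followed by an ε₂-differentially private mechanism yields an (ε₁+ε₂)-differentially private mechanism.) -/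
/-- Sequential composition of differential privacy: if `p₁, p₂` satisfy a pointwise
`exp ε₁` ratio bound and the kernels `k₁, k₂` satisfy a pointwise `exp ε₂` ratio bound,
then the composed mechanisms satisfy an `exp (ε₁ + ε₂)` ratio bound. -/
theorem sequential_composition
    {α β : Type*} (ε₁ ε₂ : ℝ) (hε₁ : 0 ≤ ε₁) (hε₂ : 0 ≤ ε₂)
    (p₁ p₂ : PMF α) (k₁ k₂ : α → PMF β)
    (hp : ∀ a : α, p₁ a ≤ ENNReal.ofReal (Real.exp ε₁) * p₂ a)
    (hk : ∀ (a : α) (b : β), k₁ a b ≤ ENNReal.ofReal (Real.exp ε₂) * k₂ a b)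
    (b : β) :
    (p₁.bind k₁) b ≤ ENNReal.ofReal (Real.exp (ε₁ + ε₂)) * (p₂.bind k₂) b := by
  simp only [PMF.bind_apply]
  rw [Real.exp_add, ENNReal.ofReal_mul (Real.exp_pos ε₁).le, ← ENNReal.tsum_mul_left]
  refine ENNReal.tsum_le_tsum fun a => ?_
  calc p₁ a * k₁ a b
      ≤ (ENNReal.ofReal (Real.exp ε₁) * p₂ a) * (ENNReal.ofReal (Real.exp ε₂) * k₂ a b) :=
        mul_le_mul' (hp a) (hk a b)
    _ = ENNReal.ofReal (Real.exp ε₁) * ENNReal.ofReal (Real.exp ε₂) * (p₂ a * k₂ a b) := by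
        ring
end

section
/- Let ι be a finite index set, α a type, ε ≥ 0, and let p₁, p₂ : ι → PMF α be families of probability mass functions such that there exists j₀ ∈ ι with p₁(j) = p₂(j) for all j ≠ j₀ and p₁(j₀)(x) ≤ exp(ε)·p₂(j₀)(x) for all x ∈ α. Then for every function x : ι → α, ∏_{j∈ι} p₁(j)(x(j)) ≤ exp(ε) · ∏_{j∈ι} p₂(j)(x(j)). (Parallel composition: independent ε-differentially private mechanisms applied to disjoint parts of the data, where a neighboring database changes only one part, together satisfy ε-differential privacy.) -/
/-- Parallel composition of differential privacy: if the families of mechanisms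
`p₁, p₂` agree on all indices except one index `j₀`, where they satisfy a pointwise
`exp ε` ratio bound, then the product of the output probabilities satisfies an
`exp ε` ratio bound. -/
theorem parallel_composition
    {ι α : Type*} [Fintype ι] (ε : ℝ) (hε : 0 ≤ ε)
    (p₁ p₂ : ι → PMF α)
    (h : ∃ j₀ : ι, (∀ j : ι, j ≠ j₀ → p₁ j = p₂ j) ∧
      (∀ x : α, p₁ j₀ x ≤ ENNReal.ofReal (Real.exp ε) * p₂ j₀ x))
    (x : ι → α) :
    ∏ j : ι, p₁ j (x j) ≤ ENNReal.ofReal (Real.exp ε) * ∏ j : ι, p₂ j (x j) := by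
  obtain ⟨j₀, hagree, hbound⟩ := h
  classical
  rw [← Finset.prod_erase_mul Finset.univ _ (Finset.mem_univ j₀),
      ← Finset.prod_erase_mul Finset.univ (fun j => p₂ j (x j)) (Finset.mem_univ j₀),
      mul_comm (ENNReal.ofReal (Real.exp ε)), mul_assoc]
  refine mul_le_mul' (Finset.prod_le_prod' ?_) ?_
  · intro j hj
    rw [hagree j (Finset.ne_of_mem_erase hj)]
  · rw [mul_comm]
    exact hbound (x j₀)
end

section
/- Let m ≥ 1, let ℓ : Fin m → ℝ satisfy ℓ(i) > 0 for all i, let k ∈ Fin m, and let ε > 0. Define weights w(i) = ℓ(i)·exp(−(ε/2)·|i − k|) and let I be a random index chosen with probability ℙ(I = i) = w(i)/Σ_j w(j). Then for every natural number η: (1) ℙ(k − I > η) ≤ (Σ_{i : k − i > η} ℓ(i)) · exp(−(ε/2)(η+1)) / ℓ(k), and (2) ℙ(I − k > η) ≤ (Σ_{i : i − k > η} ℓ(i)) · exp(−(ε/2)(η+1)) / ℓ(k). -/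
open Finset

lemma em_tail_aux
    (m : ℕ) (ℓ : Fin m → ℝ) (hℓ : ∀ i, 0 < ℓ i)
    (k : Fin m) (ε : ℝ) (hε : 0 < ε)
    (w : Fin m → ℝ)
    (hw : ∀ i, w i = ℓ i * Real.exp (-(ε / 2) * |(i : ℝ) - (k : ℝ)|))
    (η : ℕ) (S : Finset (Fin m))
    (hS : ∀ i ∈ S, (η : ℝ) + 1 ≤ |(i : ℝ) - (k : ℝ)|) :
    (∑ i ∈ S, w i) / (∑ j, w j) ≤
      (∑ i ∈ S, ℓ i) * Real.exp (-(ε / 2) * (η + 1)) / ℓ k := by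
  have hwpos : ∀ i, 0 < w i := fun i => by
    rw [hw]; exact mul_pos (hℓ i) (Real.exp_pos _)
  have hD : ℓ k ≤ ∑ j, w j := by
    have : w k = ℓ k := by
      rw [hw]; simp
    calc ℓ k = w k := this.symm
      _ ≤ ∑ j, w j := Finset.single_le_sum (fun i _ => (hwpos i).le) (mem_univ k)
  have hnum : (∑ i ∈ S, w i) ≤ (∑ i ∈ S, ℓ i) * Real.exp (-(ε / 2) * (η + 1)) := by
    rw [Finset.sum_mul]
    apply Finset.sum_le_sum
    intro i hi
    rw [hw]
    apply mul_le_mul_of_nonneg_left _ (hℓ i).le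
    apply Real.exp_le_exp.mpr
    have := hS i hi
    nlinarith
  have h0 : 0 ≤ ∑ i ∈ S, w i := Finset.sum_nonneg fun i _ => (hwpos i).le
  have hnum' : 0 ≤ (∑ i ∈ S, ℓ i) * Real.exp (-(ε / 2) * (η + 1)) := le_trans h0 hnum
  exact div_le_div₀ hnum' hnum (hℓ k) hD

/-- Tail bounds for the Exponential mechanism selecting a noisy rank: if index `i` is
chosen with probability proportional to `ℓ i · exp (-(ε/2)·|i - k|)`, then the
probability that the chosen rank deviates from `k` by more than `η` (in either
direction) is bounded by the corresponding tail sum of lengths times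
`exp (-(ε/2)(η+1)) / ℓ k`. -/
theorem exponential_mechanism_rank_tails
    (m : ℕ) (hm : 1 ≤ m) (ℓ : Fin m → ℝ) (hℓ : ∀ i, 0 < ℓ i)
    (k : Fin m) (ε : ℝ) (hε : 0 < ε)
    (w : Fin m → ℝ)
    (hw : ∀ i, w i = ℓ i * Real.exp (-(ε / 2) * |(i : ℝ) - (k : ℝ)|))
    (η : ℕ) :
    ((∑ i ∈ univ.filter (fun i : Fin m => (k : ℝ) - (i : ℝ) > η), w i) / (∑ j, w j) ≤
        (∑ i ∈ univ.filter (fun i : Fin m => (k : ℝ) - (i : ℝ) > η), ℓ i) *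
          Real.exp (-(ε / 2) * (η + 1)) / ℓ k) ∧
      ((∑ i ∈ univ.filter (fun i : Fin m => (i : ℝ) - (k : ℝ) > η), w i) / (∑ j, w j) ≤
        (∑ i ∈ univ.filter (fun i : Fin m => (i : ℝ) - (k : ℝ) > η), ℓ i) *
          Real.exp (-(ε / 2) * (η + 1)) / ℓ k) := by
  constructor
  · apply em_tail_aux m ℓ hℓ k ε hε w hw η
    intro i hi
    simp only [mem_filter] at hi
    have h : (η : ℝ) < (k : ℝ) - (i : ℝ) := hi.2
    have hint : ((η : ℤ) : ℝ) < ((k : ℤ) : ℝ) - ((i : ℤ) : ℝ) := by push_cast; push_cast at h; linarith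
    have : (η : ℤ) + 1 ≤ (k : ℤ) - (i : ℤ) := by exact_mod_cast hint
    have : ((η : ℤ) : ℝ) + 1 ≤ ((k : ℤ) : ℝ) - ((i : ℤ) : ℝ) := by exact_mod_cast this
    rw [abs_sub_comm]
    push_cast at this ⊢
    rw [abs_of_nonneg (by linarith)]
    linarith
  · apply em_tail_aux m ℓ hℓ k ε hε w hw η
    intro i hi
    simp only [mem_filter] at hi
    have h : (η : ℝ) < (i : ℝ) - (k : ℝ) := hi.2
    have hint : ((η : ℤ) : ℝ) < ((i : ℤ) : ℝ) - ((k : ℤ) : ℝ) := by push_cast; push_cast at h; linarith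
    have : (η : ℤ) + 1 ≤ (i : ℤ) - (k : ℤ) := by exact_mod_cast hint
    have : ((η : ℤ) : ℝ) + 1 ≤ ((i : ℤ) : ℝ) - ((k : ℤ) : ℝ) := by exact_mod_cast this
    push_cast at this ⊢
    rw [abs_of_nonneg (by linarith)]
    linarith
end
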